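/- Let K be a field of characteristic zero and L/K a finite Galois extension. Let N₁, N₂ be differential modules over K(x). If N₁ ⊗_{K(x)} L(x) ≅ N₂ ⊗_{K(x)} L(x) as differential modules over L(x), then N₁ ≅ N₂ as differential modules over K(x). -/

import Mathlib

open Polynomial
open scoped nonZeroDivisors

namespace Statement4Aux

variable {K L A : Type*} [Field K] [Field L] [Field A]

theorem ratfunc_hom_ext (φ ψ : RatFunc K →+* A)
    (hC : ∀ a : K, φ (RatFunc.C a) = ψ (RatFunc.C a)) (hX : φ RatFunc.X = ψ RatFunc.X) :
    φ = ψ := by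
  have hpoly : ∀ p : K[X], φ (algebraMap K[X] (RatFunc K) p) = ψ (algebraMap K[X] (RatFunc K) p) := by
    intro p
    have := Polynomial.ringHom_ext (R := K) (S := A)
      (f := φ.comp (algebraMap K[X] (RatFunc K))) (g := ψ.comp (algebraMap K[X] (RatFunc K)))
      (fun a => by simpa [RatFunc.algebraMap_C] using hC a)
      (by simpa [RatFunc.algebraMap_X] using hX)
    exact RingHom.congr_fun this p
  ext f
  have h := RatFunc.num_div_denom f
  have hd : algebraMap K[X] (RatFunc K) f.denom ≠ 0 :=
    RatFunc.algebraMap_ne_zero f.denom_ne_zero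
  rw [← h, map_div₀, map_div₀, hpoly, hpoly]

theorem der_eq_zero (φ : RatFunc K →+* A) (d : RatFunc K →+ A)
    (hmul : ∀ f g, d (f * g) = d f * φ g + φ f * d g)
    (hC : ∀ a : K, d (RatFunc.C a) = 0) (hX : d RatFunc.X = 0) :
    ∀ f, d f = 0 := by
  have hpoly : ∀ p : K[X], d (algebraMap K[X] (RatFunc K) p) = 0 := by
    intro p
    induction p using Polynomial.induction_on with
    | C a => simpa [RatFunc.algebraMap_C] using hC a
    | add p q hp hq => rw [map_add, map_add, hp, hq, add_zero]
    | monomial n a ih =>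
        have heq : (algebraMap K[X] (RatFunc K)) (C a * X ^ (n + 1)) =
            (algebraMap K[X] (RatFunc K)) (C a * X ^ n) * (algebraMap K[X] (RatFunc K)) X := by
          rw [← map_mul]; ring_nf
        rw [heq, hmul, ih, zero_mul, zero_add, RatFunc.algebraMap_X, hX, mul_zero]
  intro f
  have h : f * algebraMap K[X] (RatFunc K) f.denom = algebraMap K[X] (RatFunc K) f.num := by
    have h0 := RatFunc.num_div_denom f
    rw [div_eq_iff (RatFunc.algebraMap_ne_zero f.denom_ne_zero)] at h0
    exact h0.symm
  have h2 := hmul f (algebraMap K[X] (RatFunc K) f.denom)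
  rw [h, hpoly, hpoly, mul_zero, add_zero] at h2
  have hd : φ (algebraMap K[X] (RatFunc K) f.denom) ≠ 0 := by
    intro h0
    exact RatFunc.algebraMap_ne_zero f.denom_ne_zero (φ.injective (by simpa using h0))
  exact (mul_eq_zero.mp h2.symm).resolve_right hd

/-- Lift a field hom `K → L` to `RatFunc K → RatFunc L` coefficientwise. -/
theorem liftPoly_cond (s : K →+* L) :
    K[X]⁰ ≤ (RatFunc L)⁰.comap ((algebraMap L[X] (RatFunc L)).comp (Polynomial.mapRingHom s)) := by
  intro p hp
  simp only [Submonoid.mem_comap, RingHom.coe_comp, Function.comp_apply]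
  rw [mem_nonZeroDivisors_iff_ne_zero] at hp ⊢
  exact RatFunc.algebraMap_ne_zero
    (fun h => hp (Polynomial.map_injective s s.injective (by simpa using h)))

noncomputable def liftPoly (s : K →+* L) : RatFunc K →+* RatFunc L :=
  RatFunc.liftRingHom ((algebraMap L[X] (RatFunc L)).comp (Polynomial.mapRingHom s))
    (liftPoly_cond s)

theorem liftPoly_algebraMap (s : K →+* L) (p : K[X]) :
    liftPoly s (algebraMap K[X] (RatFunc K) p) = algebraMap L[X] (RatFunc L) (p.map s) := by
  have := RatFunc.liftRingHom_apply_div (L := RatFunc L)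
    ((algebraMap L[X] (RatFunc L)).comp (Polynomial.mapRingHom s)) (liftPoly_cond s) p 1
  simpa [liftPoly] using this

theorem liftPoly_C (s : K →+* L) (a : K) : liftPoly s (RatFunc.C a) = RatFunc.C (s a) := by
  simpa [RatFunc.algebraMap_C] using liftPoly_algebraMap s (Polynomial.C a)

theorem liftPoly_X (s : K →+* L) : liftPoly s RatFunc.X = RatFunc.X := by
  simpa [RatFunc.algebraMap_X] using liftPoly_algebraMap s Polynomial.X

theorem liftPoly_apply (s : K →+* L) (f : RatFunc K) :
    liftPoly s f = algebraMap L[X] (RatFunc L) (f.num.map s) /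
      algebraMap L[X] (RatFunc L) (f.denom.map s) := by
  rw [← RatFunc.num_div_denom f, map_div₀, liftPoly_algebraMap, liftPoly_algebraMap,
    RatFunc.num_div_denom]


section Galois

variable [Algebra K L]

/-- The underlying ring hom of a Galois automorphism. -/
def aer (σ : L ≃ₐ[K] L) : L →+* L := σ.toRingEquiv.toRingHom

@[simp] theorem aer_apply (σ : L ≃ₐ[K] L) (a : L) : aer σ a = σ a := rfl

/-- Coefficientwise action of a Galois automorphism on `RatFunc L`. -/
noncomputable def gmap (σ : L ≃ₐ[K] L) : RatFunc L →+* RatFunc L :=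
  liftPoly (aer σ)

theorem gmap_C (σ : L ≃ₐ[K] L) (a : L) : gmap σ (RatFunc.C a) = RatFunc.C (σ a) :=
  liftPoly_C _ a

theorem gmap_X (σ : L ≃ₐ[K] L) : gmap σ RatFunc.X = RatFunc.X :=
  liftPoly_X _

theorem gmap_gmap (τ σ : L ≃ₐ[K] L) (f : RatFunc L) :
    gmap τ (gmap σ f) = gmap (τ * σ) f := by
  have : (gmap τ).comp (gmap σ) = gmap (τ * σ) :=
    ratfunc_hom_ext _ _ (fun a => by simp [gmap_C, AlgEquiv.mul_apply])
      (by simp [gmap_X])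
  exact RingHom.congr_fun this f

theorem gmap_one (f : RatFunc L) : gmap (1 : L ≃ₐ[K] L) f = f := by
  have : gmap (1 : L ≃ₐ[K] L) = RingHom.id (RatFunc L) :=
    ratfunc_hom_ext _ _ (fun a => by simp [gmap_C]) (by simp [gmap_X])
  exact RingHom.congr_fun this f

theorem iota_eq (ι : RatFunc K →+* RatFunc L)
    (hιC : ∀ a : K, ι (RatFunc.C a) = RatFunc.C (algebraMap K L a))
    (hιX : ι RatFunc.X = RatFunc.X) : ι = liftPoly (algebraMap K L) :=
  ratfunc_hom_ext _ _ (fun a => by rw [hιC, liftPoly_C]) (by rw [hιX, liftPoly_X])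

theorem gmap_iota (ι : RatFunc K →+* RatFunc L)
    (hιC : ∀ a : K, ι (RatFunc.C a) = RatFunc.C (algebraMap K L a))
    (hιX : ι RatFunc.X = RatFunc.X) (σ : L ≃ₐ[K] L) (f : RatFunc K) :
    gmap σ (ι f) = ι f := by
  have : (gmap σ).comp ι = ι :=
    ratfunc_hom_ext _ _ (fun a => by simp [hιC, gmap_C, AlgEquiv.commutes]) (by simp [hιX, gmap_X])
  exact RingHom.congr_fun this f

theorem gmap_der (δL : Derivation L (RatFunc L) (RatFunc L)) (hδL : δL RatFunc.X = 1)
    (σ : L ≃ₐ[K] L) (f : RatFunc L) : gmap σ (δL f) = δL (gmap σ f) := by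
  have key := der_eq_zero (gmap σ)
    (AddMonoidHom.mk' (fun f => gmap σ (δL f) - δL (gmap σ f)) (by
      intro a b
      simp only [map_add]
      ring))
    (by
      intro a b
      simp only [AddMonoidHom.mk'_apply, Derivation.leibniz, smul_eq_mul, map_add, map_mul]
      ring)
    (fun a => by
      simp only [AddMonoidHom.mk'_apply, gmap_C]
      rw [← RatFunc.algebraMap_eq_C, Derivation.map_algebraMap, Derivation.map_algebraMap,
        map_zero, sub_zero])
    (by simp only [AddMonoidHom.mk'_apply, hδL, gmap_X, map_one, hδL, sub_self])
  have := key f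
  simpa [sub_eq_zero] using this

theorem iota_der (ι : RatFunc K →+* RatFunc L)
    (hιC : ∀ a : K, ι (RatFunc.C a) = RatFunc.C (algebraMap K L a))
    (hιX : ι RatFunc.X = RatFunc.X)
    (δK : Derivation K (RatFunc K) (RatFunc K)) (hδK : δK RatFunc.X = 1)
    (δL : Derivation L (RatFunc L) (RatFunc L)) (hδL : δL RatFunc.X = 1)
    (f : RatFunc K) : ι (δK f) = δL (ι f) := by
  have key := der_eq_zero ι
    (AddMonoidHom.mk' (fun f => ι (δK f) - δL (ι f)) (by
      intro a b
      simp only [map_add]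
      ring))
    (by
      intro a b
      simp only [AddMonoidHom.mk'_apply, Derivation.leibniz, smul_eq_mul, map_add, map_mul]
      ring)
    (fun a => by
      simp only [AddMonoidHom.mk'_apply, hιC]
      rw [← RatFunc.algebraMap_eq_C (K := K), Derivation.map_algebraMap,
        ← RatFunc.algebraMap_eq_C (K := L), Derivation.map_algebraMap, map_zero, sub_zero])
    (by simp only [AddMonoidHom.mk'_apply, hδK, hιX, map_one, hδL, sub_self])
  have := key f
  simpa [sub_eq_zero] using this

theorem fixed_mem_range [FiniteDimensional K L] [IsGalois K L]
    (ι : RatFunc K →+* RatFunc L)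
    (hιC : ∀ a : K, ι (RatFunc.C a) = RatFunc.C (algebraMap K L a))
    (hιX : ι RatFunc.X = RatFunc.X) (f : RatFunc L)
    (hf : ∀ σ : L ≃ₐ[K] L, gmap σ f = f) : ∃ g : RatFunc K, ι g = f := by
  have key : ∀ σ : L ≃ₐ[K] L, f.num.map (aer σ) = f.num ∧
      f.denom.map (aer σ) = f.denom := by
    intro σ
    have h1 : gmap σ f = algebraMap L[X] (RatFunc L) (f.num.map (aer σ)) /
        algebraMap L[X] (RatFunc L) (f.denom.map (aer σ)) := liftPoly_apply _ f
    rw [hf σ] at h1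
    have hinj : Function.Injective (aer σ) := σ.injective
    have hdm : f.denom.map (aer σ) ≠ 0 := fun h =>
      f.denom_ne_zero (Polynomial.map_injective (aer σ) hinj (by simpa using h))
    have h2 : f.num * f.denom.map (aer σ) = f.num.map (aer σ) * f.denom :=
      (RatFunc.num_mul_eq_mul_denom_iff hdm).mpr h1
    have hcop := RatFunc.isCoprime_num_denom f
    have hcopm : IsCoprime (f.num.map (aer σ)) (f.denom.map (aer σ)) := by
      have := hcop.map (Polynomial.mapRingHom (aer σ))
      simpa [Polynomial.coe_mapRingHom] using this
    have hd1 : f.denom ∣ f.denom.map (aer σ) := by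
      have hdvd : f.denom ∣ f.num * f.denom.map (aer σ) :=
        ⟨f.num.map (aer σ), by rw [h2]; ring⟩
      exact hcop.symm.dvd_of_dvd_mul_left hdvd
    have hd2 : f.denom.map (aer σ) ∣ f.denom := by
      have hdvd : f.denom.map (aer σ) ∣ f.num.map (aer σ) * f.denom :=
        ⟨f.num, by rw [← h2]; ring⟩
      exact hcopm.symm.dvd_of_dvd_mul_left hdvd
    have hdeq : f.denom.map (aer σ) = f.denom :=
      Polynomial.eq_of_monic_of_associated (Polynomial.Monic.map (aer σ) f.monic_denom)
        f.monic_denom (associated_of_dvd_dvd hd2 hd1)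
    have hneq : f.num.map (aer σ) = f.num := by
      have h3 := h2
      rw [hdeq] at h3
      exact mul_right_cancel₀ f.denom_ne_zero h3.symm
    exact ⟨hneq, hdeq⟩
  have hrange : ∀ x : L, (∀ σ : L ≃ₐ[K] L, σ x = x) → x ∈ Set.range (algebraMap K L) := by
    intro x hx
    have htf := (IsGalois.tfae (F := K) (E := L)).out 0 1
    have hbot : IntermediateField.fixedField (⊤ : Subgroup (L ≃ₐ[K] L)) =
        (⊥ : IntermediateField K L) := htf.mp ‹IsGalois K L›
    have hxmem : x ∈ IntermediateField.fixedField (⊤ : Subgroup (L ≃ₐ[K] L)) := fun g => hx g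
    rw [hbot] at hxmem
    exact IntermediateField.mem_bot.mp hxmem
  have hnum : ∃ p : K[X], p.map (algebraMap K L) = f.num := by
    rw [← Polynomial.mem_lifts, Polynomial.lifts_iff_coeff_lifts]
    intro n
    refine hrange _ (fun σ => ?_)
    have := congrArg (fun p => Polynomial.coeff p n) (key σ).1
    simpa [Polynomial.coeff_map] using this
  have hden : ∃ q : K[X], q.map (algebraMap K L) = f.denom := by
    rw [← Polynomial.mem_lifts, Polynomial.lifts_iff_coeff_lifts]
    intro n
    refine hrange _ (fun σ => ?_)
    have := congrArg (fun p => Polynomial.coeff p n) (key σ).2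
    simpa [Polynomial.coeff_map] using this
  obtain ⟨p, hp⟩ := hnum
  obtain ⟨q, hq⟩ := hden
  refine ⟨algebraMap K[X] (RatFunc K) p / algebraMap K[X] (RatFunc K) q, ?_⟩
  rw [map_div₀, iota_eq ι hιC hιX, liftPoly_algebraMap, liftPoly_algebraMap, hp, hq,
    RatFunc.num_div_denom]

end Galois

section Dedekind

variable [Algebra K L]

theorem gal_rows_isUnit {m : Type*} [Fintype m] [DecidableEq m]
    (bL : Module.Basis m K L) (eG : (L ≃ₐ[K] L) ≃ m) :
    IsUnit (Matrix.of fun s j : m => (eG.symm s) (bL j)).det := by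
  letI : Fintype (L ≃ₐ[K] L) := Fintype.ofEquiv m eG.symm
  rw [← Matrix.isUnit_iff_isUnit_det, ← Matrix.linearIndependent_rows_iff_isUnit,
    Fintype.linearIndependent_iff]
  intro g hg
  -- the sum of characters vanishes everywhere
  have hrow : ∀ j : m, ∑ t : m, g t * (eG.symm t) (bL j) = 0 := by
    intro j
    have := congrFun hg j
    simpa [Matrix.of_apply, Finset.sum_apply] using this
  have hfull : ∀ x : L, ∑ t : m, g t * (eG.symm t) x = 0 := by
    intro x
    conv_lhs => rw [← bL.sum_repr x]
    have step : ∀ t : m, g t * (eG.symm t) (∑ j, bL.repr x j • bL j)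
        = ∑ j, bL.repr x j • (g t * (eG.symm t) (bL j)) := by
      intro t
      rw [map_sum, Finset.mul_sum]
      refine Finset.sum_congr rfl (fun j _ => ?_)
      rw [map_smul, mul_smul_comm]
    rw [Finset.sum_congr rfl (fun t _ => step t), Finset.sum_comm]
    refine Finset.sum_eq_zero (fun j _ => ?_)
    rw [← Finset.smul_sum, hrow j, smul_zero]
  -- Dedekind's linear independence of characters
  let J : (L ≃ₐ[K] L) → (L →* L) := fun σ => MonoidHomClass.toMonoidHom σ
  have hJ : Function.Injective J := by
    intro σ τ h
    ext x
    exact congrFun (congrArg (fun (f : L →* L) => (f : L → L)) h) x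
  have hLI : LinearIndependent L (fun σ : L ≃ₐ[K] L => ((J σ : L →* L) : L → L)) :=
    (linearIndependent_monoidHom L L).comp J hJ
  have hLI' := Fintype.linearIndependent_iff.mp hLI (fun σ => g (eG σ))
  have hzero : ∀ σ : L ≃ₐ[K] L, g (eG σ) = 0 := by
    apply hLI'
    funext x
    have h2 : ∑ σ : L ≃ₐ[K] L, g (eG σ) * σ x = 0 := by
      have hcomp := Equiv.sum_comp eG (fun t => g t * (eG.symm t) x)
      simp_rw [Equiv.symm_apply_apply] at hcomp
      rw [hcomp]
      exact hfull x
    simpa [Finset.sum_apply, J] using h2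
  intro s
  have := hzero (eG.symm s)
  simpa using this

end Dedekind

section Density

theorem density {k R : Type*} [Field k] [Infinite k] [Field R] (g : k →+* R) :
    ∀ {m : ℕ} (F : MvPolynomial (Fin m) R), F ≠ 0 →
      ∃ a : Fin m → k, MvPolynomial.eval (fun j => g (a j)) F ≠ 0 := by
  intro m
  induction m with
  | zero =>
      intro F hF
      obtain ⟨c, rfl⟩ := MvPolynomial.C_surjective (Fin 0) F
      refine ⟨fun j => j.elim0, ?_⟩
      simp only [MvPolynomial.eval_C]
      exact fun h => hF (by rw [h, map_zero])
  | succ n ih =>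
      intro F hF
      set F' := MvPolynomial.finSuccEquiv R n F with hF'def
      have hF'0 : F' ≠ 0 := by
        intro h
        exact hF ((map_eq_zero_iff _ (MvPolynomial.finSuccEquiv R n).injective).mp h)
      have hlead : F'.leadingCoeff ≠ 0 := Polynomial.leadingCoeff_ne_zero.mpr hF'0
      obtain ⟨a', ha'⟩ := ih F'.leadingCoeff hlead
      set G := F'.map (MvPolynomial.eval (fun j => g (a' j))) with hGdef
      have hG : G ≠ 0 := by
        intro h
        apply ha'
        have hc := congrArg (fun p => Polynomial.coeff p F'.natDegree) h
        simp only [hGdef, Polynomial.coeff_map, Polynomial.coeff_zero] at hc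
        rw [Polynomial.leadingCoeff] at *
        exact hc
      have hroots := Polynomial.finite_setOf_isRoot hG
      have hfin : {a : k | Polynomial.eval (g a) G = 0}.Finite := by
        have hs : {a : k | Polynomial.eval (g a) G = 0} ⊆ g ⁻¹' {x | G.IsRoot x} :=
          fun a ha => ha
        exact (hroots.preimage g.injective.injOn).subset hs
      obtain ⟨a₀, ha₀⟩ := hfin.infinite_compl.nonempty
      set a : Fin (n + 1) → k := Fin.cons a₀ a' with hadef
      refine ⟨a, ?_⟩
      have hpt : (fun j => g (a j)) = Fin.cons (g a₀) (fun j => g (a' j)) := by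
        funext j
        refine Fin.cases ?_ (fun i => ?_) j <;> simp [hadef]
      rw [hpt, MvPolynomial.eval_eq_eval_mv_eval']
      exact ha₀

end Density

section Core

open Matrix

variable [Algebra K L] [FiniteDimensional K L] [IsGalois K L] [CharZero K]

theorem descent_core {n : Type*} [Fintype n] [DecidableEq n]
    (ι : RatFunc K →+* RatFunc L)
    (hιC : ∀ a : K, ι (RatFunc.C a) = RatFunc.C (algebraMap K L a))
    (hιX : ι RatFunc.X = RatFunc.X)
    (δK : Derivation K (RatFunc K) (RatFunc K)) (hδK : δK RatFunc.X = 1)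
    (δL : Derivation L (RatFunc L) (RatFunc L)) (hδL : δL RatFunc.X = 1)
    (A₁ A₂ : Matrix n n (RatFunc K)) (P : Matrix n n (RatFunc L))
    (hP : ∀ i j, δL (P i j) = (∑ k, P i k * ι (A₁ k j)) - ∑ k, ι (A₂ i k) * P k j)
    (hPdet : P.det ≠ 0) :
    ∃ Q : Matrix n n (RatFunc K),
      (∀ i j, δK (Q i j) = (∑ k, Q i k * A₁ k j) - ∑ k, A₂ i k * Q k j) ∧ Q.det ≠ 0 := by
  classical
  letI : Fintype (L ≃ₐ[K] L) := AlgEquiv.fintype K L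
  have hC_alg : ∀ c : L, RatFunc.C c = algebraMap L (RatFunc L) c :=
    fun c => (RatFunc.algebraMap_eq_C (K := L)) ▸ rfl
  have hδC : ∀ c : L, δL (RatFunc.C c) = 0 := by
    intro c
    rw [hC_alg, Derivation.map_algebraMap]
  have hδCmul : ∀ (c : L) (x : RatFunc L), δL (RatFunc.C c * x) = RatFunc.C c * δL x := by
    intro c x
    rw [Derivation.leibniz, hδC, smul_eq_mul, smul_eq_mul, mul_zero, add_zero]
  -- the conjugates of P satisfy the same ODE
  have hPσ : ∀ (σ : L ≃ₐ[K] L) (i j : n), δL (gmap σ (P i j)) =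
      (∑ k, gmap σ (P i k) * ι (A₁ k j)) - ∑ k, ι (A₂ i k) * gmap σ (P k j) := by
    intro σ i j
    rw [← gmap_der δL hδL σ, hP i j, map_sub, map_sum, map_sum]
    congr 1 <;> refine Finset.sum_congr rfl (fun k _ => ?_) <;>
      rw [_root_.map_mul, gmap_iota ι hιC hιX]
  -- Galois-averaged solutions
  set bL := Module.finBasis K L with hbL
  set m := Module.finrank K L
  set eG : (L ≃ₐ[K] L) ≃ Fin m := Fintype.equivFinOfCardEq (by rw [← Nat.card_eq_fintype_card]; exact IsGalois.card_aut_eq_finrank K L)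
    with heG
  set u : Fin m → n → n → RatFunc L :=
    fun j i k => ∑ σ : L ≃ₐ[K] L, RatFunc.C (σ (bL j)) * gmap σ (P i k) with hu
  -- each u j is Galois-fixed
  have hufix : ∀ (j : Fin m) (i k : n) (τ : L ≃ₐ[K] L), gmap τ (u j i k) = u j i k := by
    intro j i k τ
    rw [hu]
    simp only
    rw [map_sum]
    have hterm : ∀ σ : L ≃ₐ[K] L, gmap τ (RatFunc.C (σ (bL j)) * gmap σ (P i k)) =
        RatFunc.C ((τ * σ) (bL j)) * gmap (τ * σ) (P i k) := by
      intro σ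
      rw [_root_.map_mul, gmap_C, gmap_gmap, AlgEquiv.mul_apply]
    rw [Finset.sum_congr rfl (fun σ _ => hterm σ)]
    exact Equiv.sum_comp (Equiv.mulLeft τ) (fun σ => RatFunc.C (σ (bL j)) * gmap σ (P i k))
  -- each u j satisfies the ODE
  have hu_ode : ∀ (j : Fin m) (i k' : n), δL (u j i k') =
      (∑ k, u j i k * ι (A₁ k k')) - ∑ k, ι (A₂ i k) * u j k k' := by
    intro j i k'
    rw [hu]
    simp only
    rw [map_sum]
    calc ∑ σ : L ≃ₐ[K] L, δL (RatFunc.C (σ (bL j)) * gmap σ (P i k'))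
        = ∑ σ : L ≃ₐ[K] L, ((∑ k, RatFunc.C (σ (bL j)) * gmap σ (P i k) * ι (A₁ k k')) -
            ∑ k, ι (A₂ i k) * (RatFunc.C (σ (bL j)) * gmap σ (P k k'))) := by
          refine Finset.sum_congr rfl (fun σ _ => ?_)
          rw [hδCmul, hPσ σ i k', mul_sub, Finset.mul_sum, Finset.mul_sum]
          congr 1
          · exact Finset.sum_congr rfl (fun k _ => by ring)
          · exact Finset.sum_congr rfl (fun k _ => by ring)
      _ = (∑ σ : L ≃ₐ[K] L, ∑ k, RatFunc.C (σ (bL j)) * gmap σ (P i k) * ι (A₁ k k')) -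
            ∑ σ : L ≃ₐ[K] L, ∑ k, ι (A₂ i k) * (RatFunc.C (σ (bL j)) * gmap σ (P k k')) := by
          rw [Finset.sum_sub_distrib]
      _ = (∑ k, (∑ σ : L ≃ₐ[K] L, RatFunc.C (σ (bL j)) * gmap σ (P i k)) * ι (A₁ k k')) -
            ∑ k, ι (A₂ i k) * ∑ σ : L ≃ₐ[K] L, RatFunc.C (σ (bL j)) * gmap σ (P k k') := by
          congr 1
          · rw [Finset.sum_comm]
            exact Finset.sum_congr rfl (fun k _ => by rw [Finset.sum_mul])
          · rw [Finset.sum_comm]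
            exact Finset.sum_congr rfl (fun k _ => by rw [Finset.mul_sum])
  -- the entries of u j descend to K
  have hexists : ∀ (j : Fin m) (i k : n), ∃ q : RatFunc K, ι q = u j i k := by
    intro j i k
    exact fixed_mem_range ι hιC hιX _ (hufix j i k)
  choose Qm hQm using hexists
  have hιinj : Function.Injective ι := ι.injective
  -- each Qm j satisfies the K-ODE
  have hQm_ode : ∀ (j : Fin m) (i k' : n), δK (Qm j i k') =
      (∑ k, Qm j i k * A₁ k k') - ∑ k, A₂ i k * Qm j k k' := by
    intro j i k'
    apply hιinj
    rw [iota_der ι hιC hιX δK hδK δL hδL, hQm, hu_ode j i k', map_sub, map_sum, map_sum]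
    congr 1 <;> refine Finset.sum_congr rfl (fun k _ => ?_) <;> rw [_root_.map_mul, hQm]
  -- recover P as an L-combination of the ι (Qm j)
  set M : Matrix (Fin m) (Fin m) L := Matrix.of fun s j => (eG.symm s) (bL j) with hMdef
  have hM : IsUnit M.det := gal_rows_isUnit bL eG
  set w : Fin m → L := M⁻¹ *ᵥ Pi.single (eG 1) 1 with hw
  have hMw : M *ᵥ w = Pi.single (eG 1) 1 := by
    rw [hw, Matrix.mulVec_mulVec, Matrix.mul_nonsing_inv _ hM, Matrix.one_mulVec]
  have hcomb : ∀ i k : n, ∑ j, RatFunc.C (w j) * ι (Qm j i k) = P i k := by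
    intro i k
    have h1 : ∀ j, ι (Qm j i k) = u j i k := fun j => hQm j i k
    calc ∑ j, RatFunc.C (w j) * ι (Qm j i k)
        = ∑ j, ∑ σ : L ≃ₐ[K] L, RatFunc.C (w j) * (RatFunc.C (σ (bL j)) * gmap σ (P i k)) := by
          refine Finset.sum_congr rfl (fun j _ => ?_)
          rw [h1 j, hu]
          simp only
          rw [Finset.mul_sum]
      _ = ∑ σ : L ≃ₐ[K] L, ∑ j, RatFunc.C (w j) * (RatFunc.C (σ (bL j)) * gmap σ (P i k)) :=
          Finset.sum_comm
      _ = ∑ σ : L ≃ₐ[K] L, RatFunc.C ((M *ᵥ w) (eG σ)) * gmap σ (P i k) := by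
          refine Finset.sum_congr rfl (fun σ _ => ?_)
          have : (M *ᵥ w) (eG σ) = ∑ j, σ (bL j) * w j := by
            simp [Matrix.mulVec, dotProduct, hMdef]
          rw [this, map_sum, Finset.sum_mul]
          refine Finset.sum_congr rfl (fun j _ => ?_)
          rw [_root_.map_mul]
          ring
      _ = P i k := by
          rw [hMw]
          rw [Finset.sum_eq_single 1]
          · simp [gmap_one]
          · intro σ _ hσ
            have : (eG σ) ≠ (eG 1) := fun h => hσ (eG.injective h)
            rw [Pi.single_apply, if_neg this]
            simp
          · intro h
            exact absurd (Finset.mem_univ 1) h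
  -- the determinant polynomial
  set N : Matrix n n (MvPolynomial (Fin m) (RatFunc K)) :=
    Matrix.of fun i k => ∑ j, MvPolynomial.X j * MvPolynomial.C (Qm j i k) with hN
  set F : MvPolynomial (Fin m) (RatFunc K) := N.det with hF
  set φc : MvPolynomial (Fin m) (RatFunc K) →+* RatFunc L :=
    MvPolynomial.eval₂Hom ι (fun j => RatFunc.C (w j)) with hφc
  have hφF : φc F = P.det := by
    rw [hF, RingHom.map_det]
    congr 1
    ext i k
    rw [RingHom.mapMatrix_apply, Matrix.map_apply, hN]
    simp only [Matrix.of_apply, map_sum, _root_.map_mul, hφc, MvPolynomial.eval₂Hom_X',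
      MvPolynomial.eval₂Hom_C]
    exact hcomb i k
  have hF0 : F ≠ 0 := fun h => hPdet (by rw [← hφF, h, map_zero])
  obtain ⟨a, ha⟩ := density (algebraMap K (RatFunc K)) F hF0
  refine ⟨Matrix.of fun i k => ∑ j, algebraMap K (RatFunc K) (a j) * Qm j i k, ?_, ?_⟩
  · intro i k'
    simp only [Matrix.of_apply]
    rw [map_sum]
    calc ∑ j, δK (algebraMap K (RatFunc K) (a j) * Qm j i k')
        = ∑ j, algebraMap K (RatFunc K) (a j) *
            ((∑ k, Qm j i k * A₁ k k') - ∑ k, A₂ i k * Qm j k k') := by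
          refine Finset.sum_congr rfl (fun j _ => ?_)
          rw [Derivation.leibniz, Derivation.map_algebraMap, smul_eq_mul, smul_eq_mul, mul_zero,
            add_zero, hQm_ode j i k']
      _ = (∑ j, ∑ k, algebraMap K (RatFunc K) (a j) * (Qm j i k * A₁ k k')) -
            ∑ j, ∑ k, algebraMap K (RatFunc K) (a j) * (A₂ i k * Qm j k k') := by
          rw [← Finset.sum_sub_distrib]
          refine Finset.sum_congr rfl (fun j _ => ?_)
          rw [mul_sub, Finset.mul_sum, Finset.mul_sum]
      _ = (∑ k, (∑ j, algebraMap K (RatFunc K) (a j) * Qm j i k) * A₁ k k') -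
            ∑ k, A₂ i k * ∑ j, algebraMap K (RatFunc K) (a j) * Qm j k k' := by
          congr 1
          · rw [Finset.sum_comm]
            refine Finset.sum_congr rfl (fun k _ => ?_)
            rw [Finset.sum_mul]
            exact Finset.sum_congr rfl (fun j _ => by ring)
          · rw [Finset.sum_comm]
            refine Finset.sum_congr rfl (fun k _ => ?_)
            rw [Finset.mul_sum]
            exact Finset.sum_congr rfl (fun j _ => by ring)
  · have hdet : (Matrix.of fun i k => ∑ j, algebraMap K (RatFunc K) (a j) * Qm j i k).det =
        MvPolynomial.eval (fun j => algebraMap K (RatFunc K) (a j)) F := by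
      rw [hF, RingHom.map_det (MvPolynomial.eval (fun j => algebraMap K (RatFunc K) (a j))) N]
      congr 1
      ext i k
      rw [RingHom.mapMatrix_apply, Matrix.map_apply, hN]
      simp [_root_.map_sum, _root_.map_mul]
    rw [hdet]
    exact ha

end Core

section Helpers

theorem coords_eq {F M : Type*} [Field F] [AddCommGroup M] [Module F M]
    {ιx : Type*} [Fintype ιx] (b : Module.Basis ιx F M) {c d : ιx → F}
    (h : ∑ i, c i • b i = ∑ i, d i • b i) : ∀ i, c i = d i := by
  have h2 : ⇑(b.repr (∑ i, c i • b i)) = ⇑(b.repr (∑ i, d i • b i)) := by rw [h]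
  rw [b.repr_sum_self, b.repr_sum_self] at h2
  exact fun i => congrFun h2 i

theorem dmod_apply_sum {F M : Type*} [Field F] [AddCommGroup M] [Module F M]
    {ιx : Type*} [Fintype ιx] (b : Module.Basis ιx F M) (δ : F → F) (D : M →+ M)
    (hD : ∀ (f : F) (v : M), D (f • v) = δ f • v + f • D v)
    (A : ιx → ιx → F) (hA : ∀ j, D (b j) = ∑ i, A i j • b i) (c : ιx → F) :
    D (∑ j, c j • b j) = ∑ i, (δ (c i) + ∑ k, A i k * c k) • b i := by
  rw [map_sum]
  calc ∑ j, D (c j • b j)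
      = ∑ j, (δ (c j) • b j + ∑ i, (A i j * c j) • b i) := by
        refine Finset.sum_congr rfl fun j _ => ?_
        rw [hD, hA, Finset.smul_sum]
        congr 1
        refine Finset.sum_congr rfl fun i _ => ?_
        rw [smul_smul, mul_comm]
    _ = ∑ j, δ (c j) • b j + ∑ j, ∑ i, (A i j * c j) • b i := Finset.sum_add_distrib
    _ = ∑ i, δ (c i) • b i + ∑ i, (∑ k, A i k * c k) • b i := by
        congr 1
        rw [Finset.sum_comm]
        refine Finset.sum_congr rfl fun i _ => ?_
        rw [← Finset.sum_smul]
    _ = ∑ i, (δ (c i) + ∑ k, A i k * c k) • b i := by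
        rw [← Finset.sum_add_distrib]
        exact Finset.sum_congr rfl fun i _ => (add_smul _ _ _).symm

theorem semilinear_apply_sum {F F₂ M M₂ : Type*} [Field F] [Field F₂] [AddCommGroup M]
    [Module F M] [AddCommGroup M₂] [Module F₂ M₂] {ιx : Type*} [Fintype ιx]
    (b : Module.Basis ιx F M) (b₂ : Module.Basis ιx F₂ M₂) (T : M →+ M₂) (ρ : F → F₂)
    (hT : ∀ (f : F) (v : M), T (f • v) = ρ f • T v)
    (Q : ιx → ιx → F₂) (hQ : ∀ j, T (b j) = ∑ i, Q i j • b₂ i) (c : ιx → F) :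
    T (∑ j, c j • b j) = ∑ i, (∑ k, Q i k * ρ (c k)) • b₂ i := by
  rw [map_sum]
  calc ∑ j, T (c j • b j) = ∑ j, ∑ i, (Q i j * ρ (c j)) • b₂ i := by
        refine Finset.sum_congr rfl fun j _ => ?_
        rw [hT, hQ, Finset.smul_sum]
        refine Finset.sum_congr rfl fun i _ => ?_
        rw [smul_smul, mul_comm]
    _ = ∑ i, (∑ k, Q i k * ρ (c k)) • b₂ i := by
        rw [Finset.sum_comm]
        exact Finset.sum_congr rfl fun i _ => (Finset.sum_smul).symm

end Helpers

end Statement4Aux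



/- **Statement 4.**  Let `K` be a field of characteristic zero and `L/K` a finite
Galois extension.  A differential module over `K(x)` is a
finite-dimensional `K(x)`-vector space `V` with an additive map `D` satisfying the
Leibniz rule with respect to the derivation `d/dx` (the unique `K`-linear derivation
`δK` of `RatFunc K` with `δK X = 1`).  Base change to `L(x)` is encoded by the
inclusion `ι : K(x) → L(x)` (determined by `ι (C a) = C a`, `ι X = X`), an
`ι`-semilinear map `κ : V → W` commuting with the derivations and carrying a basis
of `V` to a basis of `W`.  If the base changes `W₁`, `W₂` of `N₁ = V₁`, `N₂ = V₂`
are isomorphic as differential modules over `L(x)`, then `V₁ ≅ V₂` over `K(x)`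
(Galois descent for isomorphism classes of differential modules). -/
theorem statement4 (K L : Type*) [Field K] [CharZero K] [Field L] [Algebra K L]
    -- `L/K` is a finite Galois extension:
    [FiniteDimensional K L] [IsGalois K L]
    -- the inclusion `K(x) → L(x)`:
    (ι : RatFunc K →+* RatFunc L)
    (hιC : ∀ a : K, ι (RatFunc.C a) = RatFunc.C (algebraMap K L a))
    (hιX : ι RatFunc.X = RatFunc.X)
    -- the derivations `d/dx`:
    (δK : Derivation K (RatFunc K) (RatFunc K)) (hδK : δK RatFunc.X = 1)
    (δL : Derivation L (RatFunc L) (RatFunc L)) (hδL : δL RatFunc.X = 1)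
    -- two differential modules over `K(x)`:
    (V₁ V₂ : Type*) [AddCommGroup V₁] [Module (RatFunc K) V₁]
    [AddCommGroup V₂] [Module (RatFunc K) V₂]
    [FiniteDimensional (RatFunc K) V₁] [FiniteDimensional (RatFunc K) V₂]
    (D₁ : V₁ →+ V₁) (hD₁ : ∀ (f : RatFunc K) (v : V₁), D₁ (f • v) = δK f • v + f • D₁ v)
    (D₂ : V₂ →+ V₂) (hD₂ : ∀ (f : RatFunc K) (v : V₂), D₂ (f • v) = δK f • v + f • D₂ v)
    -- their base changes to `L(x)`:
    (W₁ W₂ : Type*) [AddCommGroup W₁] [Module (RatFunc L) W₁]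
    [AddCommGroup W₂] [Module (RatFunc L) W₂]
    (E₁ : W₁ →+ W₁) (hE₁ : ∀ (f : RatFunc L) (w : W₁), E₁ (f • w) = δL f • w + f • E₁ w)
    (E₂ : W₂ →+ W₂) (hE₂ : ∀ (f : RatFunc L) (w : W₂), E₂ (f • w) = δL f • w + f • E₂ w)
    (κ₁ : V₁ →+ W₁) (hκ₁ : ∀ (f : RatFunc K) (v : V₁), κ₁ (f • v) = ι f • κ₁ v)
    (hκ₁D : ∀ v : V₁, κ₁ (D₁ v) = E₁ (κ₁ v))
    (κ₂ : V₂ →+ W₂) (hκ₂ : ∀ (f : RatFunc K) (v : V₂), κ₂ (f • v) = ι f • κ₂ v)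
    (hκ₂D : ∀ v : V₂, κ₂ (D₂ v) = E₂ (κ₂ v))
    (ι₁ ι₂ : Type*)
    (bV₁ : Module.Basis ι₁ (RatFunc K) V₁) (bW₁ : Module.Basis ι₁ (RatFunc L) W₁)
    (hb₁ : ∀ i, κ₁ (bV₁ i) = bW₁ i)
    (bV₂ : Module.Basis ι₂ (RatFunc K) V₂) (bW₂ : Module.Basis ι₂ (RatFunc L) W₂)
    (hb₂ : ∀ i, κ₂ (bV₂ i) = bW₂ i)
    -- the hypothesis: `W₁ ≅ W₂` as differential modules over `L(x)`:
    (hiso : ∃ Φ : W₁ ≃ₗ[RatFunc L] W₂, ∀ w : W₁, Φ (E₁ w) = E₂ (Φ w)) :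
    -- conclusion: `V₁ ≅ V₂` as differential modules over `K(x)`:
    ∃ Ψ : V₁ ≃ₗ[RatFunc K] V₂, ∀ v : V₁, Ψ (D₁ v) = D₂ (Ψ v) := by
  classical
  obtain ⟨Φ, hΦ⟩ := hiso
  letI : Fintype ι₁ := FiniteDimensional.fintypeBasisIndex bV₁
  letI : Fintype ι₂ := FiniteDimensional.fintypeBasisIndex bV₂
  let e : ι₁ ≃ ι₂ := (bW₁.map Φ).indexEquiv bW₂
  let bV₂' : Module.Basis ι₁ (RatFunc K) V₂ := bV₂.reindex e.symm
  let bW₂' : Module.Basis ι₁ (RatFunc L) W₂ := bW₂.reindex e.symm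
  have hb₂' : ∀ i, κ₂ (bV₂' i) = bW₂' i := by
    intro i
    simp only [bV₂', bW₂', Module.Basis.reindex_apply]
    exact hb₂ _
  -- matrices of the derivations
  set A₁ : Matrix ι₁ ι₁ (RatFunc K) := Matrix.of fun i j => bV₁.repr (D₁ (bV₁ j)) i with hA₁def
  set A₂ : Matrix ι₁ ι₁ (RatFunc K) := Matrix.of fun i j => bV₂'.repr (D₂ (bV₂' j)) i with hA₂def
  have hA₁ : ∀ j, D₁ (bV₁ j) = ∑ i, A₁ i j • bV₁ i := fun j => (bV₁.sum_repr _).symm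
  have hA₂ : ∀ j, D₂ (bV₂' j) = ∑ i, A₂ i j • bV₂' i := fun j => (bV₂'.sum_repr _).symm
  have hB₁ : ∀ j, E₁ (bW₁ j) = ∑ i, ι (A₁ i j) • bW₁ i := by
    intro j
    rw [← hb₁ j, ← hκ₁D, hA₁ j, map_sum]
    exact Finset.sum_congr rfl fun i _ => by rw [hκ₁, hb₁]
  have hB₂ : ∀ j, E₂ (bW₂' j) = ∑ i, ι (A₂ i j) • bW₂' i := by
    intro j
    rw [← hb₂' j, ← hκ₂D, hA₂ j, map_sum]
    exact Finset.sum_congr rfl fun i _ => by rw [hκ₂, hb₂']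
  -- matrix of Φ
  set P : Matrix ι₁ ι₁ (RatFunc L) := Matrix.of fun i j => bW₂'.repr (Φ (bW₁ j)) i with hPdef
  have hPb : ∀ j, Φ (bW₁ j) = ∑ i, P i j • bW₂' i := fun j => (bW₂'.sum_repr _).symm
  -- Φ intertwines, in matrix form
  have hP_ode : ∀ i j, δL (P i j) = (∑ k, P i k * ι (A₁ k j)) - ∑ k, ι (A₂ i k) * P k j := by
    intro i j
    have hL : Φ (E₁ (bW₁ j)) = ∑ i, (∑ k, P i k * ι (A₁ k j)) • bW₂' i := by
      rw [hB₁ j]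
      exact Statement4Aux.semilinear_apply_sum bW₁ bW₂' Φ.toLinearMap.toAddMonoidHom id
        (fun f v => by simp) (fun i j => P i j) hPb _
    have hR : E₂ (Φ (bW₁ j)) = ∑ i, (δL (P i j) + ∑ k, ι (A₂ i k) * P k j) • bW₂' i := by
      rw [hPb j]
      exact Statement4Aux.dmod_apply_sum bW₂' δL E₂ hE₂ (fun i k => ι (A₂ i k)) hB₂ _
    have hLR := hL.symm.trans ((hΦ (bW₁ j)).trans hR)
    have hco := Statement4Aux.coords_eq bW₂' hLR i
    rw [eq_sub_iff_add_eq]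
    exact hco.symm
  -- P is invertible
  have hPmat : P = LinearMap.toMatrix bW₁ bW₂' Φ.toLinearMap := by
    ext i j
    rw [LinearMap.toMatrix_apply]
    rfl
  have hPP : P * LinearMap.toMatrix bW₂' bW₁ Φ.symm.toLinearMap = 1 := by
    rw [hPmat, ← LinearMap.toMatrix_comp bW₂' bW₁ bW₂']
    have : Φ.toLinearMap.comp Φ.symm.toLinearMap = LinearMap.id := by
      ext w
      simp
    rw [this, LinearMap.toMatrix_id]
  have hPdet : P.det ≠ 0 := by
    intro h
    have := congrArg Matrix.det hPP
    rw [Matrix.det_mul, h, zero_mul, Matrix.det_one] at this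
    exact zero_ne_one this
  -- descend
  obtain ⟨Q, hQode, hQdet⟩ := Statement4Aux.descent_core ι hιC hιX δK hδK δL hδL A₁ A₂ P
    hP_ode hPdet
  have hQunit : IsUnit Q.det := isUnit_iff_ne_zero.mpr hQdet
  -- build the isomorphism
  set Ψl : V₁ →ₗ[RatFunc K] V₂ := Matrix.toLin bV₁ bV₂' Q with hΨl
  set Ψi : V₂ →ₗ[RatFunc K] V₁ := Matrix.toLin bV₂' bV₁ Q⁻¹ with hΨi
  have h1 : Ψl.comp Ψi = LinearMap.id := by
    rw [hΨl, hΨi, ← Matrix.toLin_mul bV₂' bV₁ bV₂', Matrix.mul_nonsing_inv _ hQunit,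
      Matrix.toLin_one]
  have h2 : Ψi.comp Ψl = LinearMap.id := by
    rw [hΨl, hΨi, ← Matrix.toLin_mul bV₁ bV₂' bV₁, Matrix.nonsing_inv_mul _ hQunit,
      Matrix.toLin_one]
  have hQb : ∀ j, Ψl (bV₁ j) = ∑ i, Q i j • bV₂' i := fun j => Matrix.toLin_self _ _ _ _
  -- the intertwining property
  have hcomm : ∀ v : V₁, Ψl (D₁ v) = D₂ (Ψl v) := by
    have hg : ∀ j, Ψl (D₁ (bV₁ j)) = D₂ (Ψl (bV₁ j)) := by
      intro j
      have hL : Ψl (D₁ (bV₁ j)) = ∑ i, (∑ k, Q i k * A₁ k j) • bV₂' i := by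
        rw [hA₁ j]
        exact Statement4Aux.semilinear_apply_sum bV₁ bV₂' Ψl.toAddMonoidHom id
          (fun f v => by simp) (fun i j => Q i j) hQb _
      have hR : D₂ (Ψl (bV₁ j)) = ∑ i, (δK (Q i j) + ∑ k, A₂ i k * Q k j) • bV₂' i := by
        rw [hQb j]
        exact Statement4Aux.dmod_apply_sum bV₂' δK D₂ hD₂ (fun i k => A₂ i k) hA₂ _
      rw [hL, hR]
      refine Finset.sum_congr rfl fun i _ => ?_
      rw [hQode i j]
      ring_nf
    -- the defect is linear, so it vanishes everywhere
    let g : V₁ →ₗ[RatFunc K] V₂ :=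
      { toFun := fun v => Ψl (D₁ v) - D₂ (Ψl v)
        map_add' := by
          intro x y
          simp only [map_add]
          abel
        map_smul' := by
          intro f v
          simp only [RingHom.id_apply]
          simp only [hD₁, map_add, map_smul, hD₂, smul_sub]
          abel }
    have hg0 : g = 0 := by
      apply Module.Basis.ext bV₁
      intro j
      show Ψl (D₁ (bV₁ j)) - D₂ (Ψl (bV₁ j)) = 0
      rw [hg j, sub_self]
    intro v
    have := congrArg (fun (h : V₁ →ₗ[RatFunc K] V₂) => h v) hg0
    simpa [g, sub_eq_zero] using this
  refine ⟨LinearEquiv.ofLinear Ψl Ψi h1 h2, fun v => ?_⟩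
  simpa using hcomm v
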